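/- For any a, r, δ > 0 and ν ∈ [0,1), and any real t ≥ 0: (a/(1+ν)) t^(1+ν) ≤ (L/2) t² + δ where L = a · ((1−ν)a / (2δ(1+ν)))^((1−ν)/(1+ν)). In other words, the Hölder upper bound (a/(1+ν))t^(1+ν) is dominated by a quadratic plus additive error δ with this choice of L. -/

import Mathlib

/-- Scalar Young-inequality computation: the Hölder upper bound
(a/(1+ν)) t^(1+ν) is dominated by (L/2) t² + δ with
L = a·((1−ν)a/(2δ(1+ν)))^((1−ν)/(1+ν)). -/
theorem stmt2 (a r δ ν : ℝ) (ha : 0 < a) (hr : 0 < r) (hδ : 0 < δ)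
    (hν : ν ∈ Set.Ico (0:ℝ) 1) (t : ℝ) (ht : 0 ≤ t) :
    (a / (1 + ν)) * t ^ (1 + ν) ≤
      (a * (((1 - ν) * a) / (2 * δ * (1 + ν))) ^ ((1 - ν) / (1 + ν))) / 2 * t ^ 2 + δ := by
  obtain ⟨hν0, hν1⟩ := hν
  have h1ν : (0:ℝ) < 1 + ν := by linarith
  have h1ν' : (0:ℝ) < 1 - ν := by linarith
  set c : ℝ := ((1 - ν) * a) / (2 * δ * (1 + ν)) with hc
  have hc0 : 0 < c := div_pos (by positivity) (by positivity)
  set l : ℝ := c ^ ((1 - ν) / (1 + ν)) with hl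
  have hl0 : 0 < l := Real.rpow_pos_of_pos hc0 _
  rcases eq_or_lt_of_le ht with h0 | ht0
  · rw [← h0, Real.zero_rpow (by linarith)]
    nlinarith [Real.rpow_nonneg hc0.le ((1-ν)/(1+ν))]
  · have hpq : ((2:ℝ)/(1+ν)).HolderConjugate (2/(1-ν)) := by
      rw [Real.holderConjugate_iff]
      constructor
      · rw [lt_div_iff₀ h1ν]; linarith
      · field_simp; ring
    have young := Real.young_inequality_of_nonneg
      (a := (l * t^2) ^ ((1+ν)/2)) (b := l ^ (-((1+ν)/2)))
      (by positivity) (by positivity) hpq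
    have hx : ((l * t^2) ^ ((1+ν)/2)) * (l ^ (-((1+ν)/2))) = t ^ (1+ν) := by
      rw [Real.mul_rpow hl0.le (by positivity), Real.rpow_neg hl0.le]
      rw [mul_comm (l ^ ((1+ν)/2)), mul_assoc, mul_inv_cancel₀ (by positivity), mul_one]
      rw [← Real.rpow_natCast t 2, ← Real.rpow_mul ht]
      congr 1; push_cast; ring
    have hxp : ((l * t^2) ^ ((1+ν)/2)) ^ ((2:ℝ)/(1+ν)) = l * t^2 := by
      rw [← Real.rpow_mul (by positivity)]
      rw [show (1+ν)/2 * (2/(1+ν)) = 1 by field_simp, Real.rpow_one]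
    have hyq : (l ^ (-((1+ν)/2))) ^ ((2:ℝ)/(1-ν)) = c⁻¹ := by
      rw [← Real.rpow_mul hl0.le, hl, ← Real.rpow_mul hc0.le]
      rw [show (1-ν)/(1+ν) * (-((1+ν)/2) * (2/(1-ν))) = -1 by field_simp]
      exact Real.rpow_neg_one c
    rw [hx, hxp, hyq] at young
    have step := mul_le_mul_of_nonneg_left young (by positivity : (0:ℝ) ≤ a/(1+ν))
    refine le_trans step (le_of_eq ?_)
    have hcinv : c⁻¹ = (2 * δ * (1 + ν)) / ((1 - ν) * a) := by
      rw [hc, inv_div]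
    rw [hcinv]
    field_simp
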